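/- Fix a field k and positive integers r, c. In the toric ideal I(2,r,c) of the no-3-way-interaction model on 2×r×c contingency tables, every binomial arising from a primitive balanced edge set of the associated 3-uniform 3-partite hypergraph (with 𝓔_blue ≠ 𝓔_red) is indispensable; consequently the Graver basis of I(2,r,c) is the unique minimal binomial generating set of I(2,r,c). -/

import Mathlib

open MvPolynomial

namespace ToricHG

variable (K : Type) [Field K] (V : Type) [Fintype V] [DecidableEq V]

/-- The edges of a hypergraph with edge set `E`, as a type. -/
abbrev Edge (E : Finset (Finset V)) : Type := {e : Finset V // e ∈ E}

/-- The monomial map `t_e ↦ ∏_{v ∈ e} x_v`. -/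
noncomputable def phiH (E : Finset (Finset V)) :
    MvPolynomial (Edge V E) K →ₐ[K] MvPolynomial V K :=
  aeval (fun e : Edge V E => ∏ v ∈ e.1, (X v : MvPolynomial V K))

/-- The toric ideal of a hypergraph. -/
noncomputable def toricIdeal (E : Finset (Finset V)) :
    Ideal (MvPolynomial (Edge V E) K) :=
  RingHom.ker (phiH K V E).toRingHom

/-- The number of edges of the multiset `M` containing `v`, counted with multiplicity. -/
def degIn (E : Finset (Finset V)) (v : V) (M : Multiset (Edge V E)) : ℕ :=
  Multiset.card (M.filter (fun e => v ∈ e.1))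

/-- The bicolored edge multiset `(B, R)` is balanced. -/
def Balanced (E : Finset (Finset V)) (B R : Multiset (Edge V E)) : Prop :=
  ∀ v : V, degIn V E v B = degIn V E v R

/-- The binomial arising from the bicolored edge multiset `(B, R)`. -/
noncomputable def binom (E : Finset (Finset V)) (B R : Multiset (Edge V E)) :
    MvPolynomial (Edge V E) K :=
  (B.map fun e => (X e : MvPolynomial (Edge V E) K)).prod -
    (R.map fun e => (X e : MvPolynomial (Edge V E) K)).prod

/-- The balanced edge set `(B, R)` is primitive. -/
def Primitive (E : Finset (Finset V)) (B R : Multiset (Edge V E)) : Prop :=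
  Balanced V E B R ∧
    ¬ ∃ B' R' : Multiset (Edge V E),
        ¬(B' = 0 ∧ R' = 0) ∧ Balanced V E B' R' ∧ B' < B ∧ R' < R

/-- The balanced edge set `(Fb, Fr)` is reducible with separator `S` and
decomposition `((G1b, G1r), S, (G2b, G2r))`. -/
def ReducibleWith (E : Finset (Finset V))
    (Fb Fr S G1b G1r G2b G2r : Multiset (Edge V E)) : Prop :=
  Balanced V E Fb Fr ∧ S ≠ 0 ∧ S.toFinset ⊆ (Fb + Fr).toFinset ∧
    Balanced V E G1b G1r ∧ Balanced V E G2b G2r ∧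
    ¬(G1b = Fb ∧ G1r = Fr) ∧ ¬(G2b = Fb ∧ G2r = Fr) ∧
    S = G1r ∩ G2b ∧ Fb = G1b + G2b ∧ Fr = G1r + G2r

/-- `S` is a splitting set of the balanced edge set `(Eb, Er)` with
decomposition `((G1b, G1r), S, (G2b, G2r))`, i.e. `(Eb, Er) + S` is reducible with
separator `S` and this decomposition. -/
def SplittingSetWith (E : Finset (Finset V))
    (Eb Er S G1b G1r G2b G2r : Multiset (Edge V E)) : Prop :=
  ReducibleWith V E (Eb + S) (Er + S) S G1b G1r G2b G2r

/-- `S` is a proper splitting set of the balanced edge set `(Eb, Er)`. -/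
def ProperSplittingSet (E : Finset (Finset V))
    (Eb Er S : Multiset (Edge V E)) : Prop :=
  ∃ G1b G1r G2b G2r : Multiset (Edge V E),
    SplittingSetWith V E Eb Er S G1b G1r G2b G2r ∧ S < G1r ∧ S < G2b

/-- A binomial: the difference of two distinct monic monomials. -/
def IsBinomial (E : Finset (Finset V)) (f : MvPolynomial (Edge V E) K) : Prop :=
  ∃ a b : (Edge V E) →₀ ℕ, a ≠ b ∧ f = monomial a 1 - monomial b 1

/-- `f` is an indispensable binomial of the toric ideal of the hypergraph. -/
def Indispensable (E : Finset (Finset V)) (f : MvPolynomial (Edge V E) K) : Prop :=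
  ∀ G : Set (MvPolynomial (Edge V E) K),
    (∀ g ∈ G, IsBinomial K V E g) → Ideal.span G = toricIdeal K V E →
      f ∈ G ∨ -f ∈ G

/-- The Graver basis of the toric ideal of the hypergraph: the binomials arising from
primitive balanced edge sets `(B, R)` with `B ≠ R`. -/
def GraverSet (E : Finset (Finset V)) : Set (MvPolynomial (Edge V E) K) :=
  {f | ∃ B R : Multiset (Edge V E), Primitive V E B R ∧ B ≠ R ∧ f = binom K V E B R}

/-- The ideal `I` is generated in degree at most `d`. -/
def GenInDegLE {σ : Type} (I : Ideal (MvPolynomial σ K)) (d : ℕ) : Prop :=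
  I = Ideal.span {f | f ∈ I ∧ f.totalDegree ≤ d}

end ToricHG

namespace ToricHG

/-! ### Auxiliary generic development -/

section Generic

variable {K : Type} [Field K] {V : Type} [Fintype V] [DecidableEq V] {E : Finset (Finset V)}

/-- The monomial `∏_{e ∈ M} t_e` associated to a multiset of edges. -/
noncomputable def mon (K : Type) [Field K] {V : Type} [Fintype V] [DecidableEq V]
    {E : Finset (Finset V)} (M : Multiset (Edge V E)) : MvPolynomial (Edge V E) K :=
  monomial M.toFinsupp 1

lemma map_prod_eq_mon (M : Multiset (Edge V E)) :
    (M.map fun e => (X e : MvPolynomial (Edge V E) K)).prod = mon K M := by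
  induction M using Multiset.induction with
  | empty =>
      simp only [Multiset.map_zero, Multiset.prod_zero, mon, Multiset.toFinsupp_zero]
      rw [← C_apply, C_1]
  | cons e M ih =>
      simp only [Multiset.map_cons, Multiset.prod_cons, ih, mon]
      have : (e ::ₘ M).toFinsupp = Finsupp.single e 1 + M.toFinsupp := by
        rw [show e ::ₘ M = {e} + M by simp, Multiset.toFinsupp_add, Multiset.toFinsupp_singleton]
      rw [this, show (X e : MvPolynomial (Edge V E) K) = monomial (Finsupp.single e 1) 1 from rfl,
        monomial_mul, one_mul]

lemma binom_eq (B R : Multiset (Edge V E)) :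
    binom K V E B R = mon K B - mon K R := by
  rw [binom, map_prod_eq_mon, map_prod_eq_mon]

lemma mon_add (M N : Multiset (Edge V E)) :
    mon K (M + N) = mon K M * mon K N := by
  rw [mon, mon, mon, Multiset.toFinsupp_add, monomial_mul, one_mul]

set_option linter.unusedSectionVars false

/-- The degree vector of a multiset of edges. -/
noncomputable def degVec (M : Multiset (Edge V E)) : V →₀ ℕ :=
  Finsupp.equivFunOnFinite.symm fun v => degIn V E v M

@[simp] lemma degVec_apply (M : Multiset (Edge V E)) (v : V) :
    degVec M v = degIn V E v M := rfl

lemma degIn_add (v : V) (M N : Multiset (Edge V E)) :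
    degIn V E v (M + N) = degIn V E v M + degIn V E v N := by
  simp [degIn, Multiset.filter_add]

lemma degVec_zero : degVec (0 : Multiset (Edge V E)) = 0 := by
  ext v; simp [degIn]

lemma degVec_add (M N : Multiset (Edge V E)) :
    degVec (M + N) = degVec M + degVec N := by
  ext v; simp [degIn_add]

/-- indicator finsupp of an edge -/
noncomputable def indF (e : Edge V E) : V →₀ ℕ := ∑ v ∈ e.1, Finsupp.single v 1

lemma indF_apply (e : Edge V E) (v : V) :
    indF e v = if v ∈ e.1 then 1 else 0 := by
  classical
  rw [indF, Finset.sum_apply']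
  simp [Finsupp.single_apply, Finset.sum_ite_eq' e.1 v fun _ => 1]

lemma degVec_cons (e : Edge V E) (M : Multiset (Edge V E)) :
    degVec (e ::ₘ M) = indF e + degVec M := by
  ext v
  simp only [Finsupp.add_apply, degVec_apply, indF_apply, degIn, Multiset.filter_cons]
  split_ifs <;> simp [Nat.add_comm]

lemma prod_X_finset (s : Finset V) :
    ∏ v ∈ s, (X v : MvPolynomial V K) = monomial (∑ v ∈ s, Finsupp.single v 1) 1 := by
  classical
  induction s using Finset.induction with
  | empty => simp only [Finset.prod_empty, Finset.sum_empty]; rw [← C_apply, C_1]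
  | insert _ _ hx ih =>
      rw [Finset.prod_insert hx, Finset.sum_insert hx, ih,
        show (X _ : MvPolynomial V K) = monomial (Finsupp.single _ 1) 1 from rfl,
        monomial_mul, one_mul]

lemma phi_mon (M : Multiset (Edge V E)) :
    phiH K V E (mon K M) = monomial (degVec M) 1 := by
  induction M using Multiset.induction with
  | empty =>
      rw [mon, Multiset.toFinsupp_zero, degVec_zero, ← C_apply, C_1, map_one, ← C_apply, C_1]
  | cons e M ih =>
      have h1 : mon K (e ::ₘ M) = (X e) * mon K M := by
        rw [← map_prod_eq_mon, ← map_prod_eq_mon, Multiset.map_cons, Multiset.prod_cons]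
      rw [h1, map_mul, ih, degVec_cons]
      rw [show (phiH K V E) (X e) = ∏ v ∈ e.1, (X v : MvPolynomial V K) from aeval_X _ e,
        prod_X_finset, ← indF, monomial_mul, one_mul]

lemma balanced_iff_degVec (M N : Multiset (Edge V E)) :
    Balanced V E M N ↔ degVec M = degVec N := by
  constructor
  · intro h; ext v; simpa using h v
  · intro h v
    have := congrArg (fun f : V →₀ ℕ => f v) h
    simpa using this

lemma phi_monomial (m : Edge V E →₀ ℕ) (a : K) :
    phiH K V E (monomial m a) = monomial (degVec m.toMultiset) a := by
  have h : (monomial m a : MvPolynomial (Edge V E) K) = C a * mon K m.toMultiset := by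
    rw [mon, Finsupp.toMultiset_toFinsupp, C_mul_monomial, mul_one]
  rw [h, map_mul, phi_mon]
  rw [show (phiH K V E) (C a) = C a from (phiH K V E).commutes a, C_mul_monomial, mul_one]

lemma mem_toric_iff (M N : Multiset (Edge V E)) :
    mon K M - mon K N ∈ toricIdeal K V E ↔ Balanced V E M N := by
  rw [toricIdeal, RingHom.mem_ker, AlgHom.toRingHom_eq_coe, RingHom.coe_coe,
    map_sub, phi_mon, phi_mon, sub_eq_zero, balanced_iff_degVec]
  constructor
  · intro h
    by_contra hne
    have h1 := congrArg (coeff (degVec M)) h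
    rw [coeff_monomial, coeff_monomial, if_pos rfl, if_neg (fun h' => hne h'.symm)] at h1
    exact one_ne_zero h1
  · intro h; rw [h]

lemma mem_toric_iff' (a b : Edge V E →₀ ℕ) :
    (monomial a 1 - monomial b 1 : MvPolynomial (Edge V E) K) ∈ toricIdeal K V E ↔
      Balanced V E a.toMultiset b.toMultiset := by
  have ha : (monomial a 1 : MvPolynomial (Edge V E) K) = mon K a.toMultiset := by
    rw [mon, Finsupp.toMultiset_toFinsupp]
  have hb : (monomial b 1 : MvPolynomial (Edge V E) K) = mon K b.toMultiset := by
    rw [mon, Finsupp.toMultiset_toFinsupp]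
  rw [ha, hb, mem_toric_iff]

/-- The set of binomials arising from balanced edge sets. -/
def BalancedBinomials (K : Type) [Field K] {V : Type} [Fintype V] [DecidableEq V]
    (E : Finset (Finset V)) : Set (MvPolynomial (Edge V E) K) :=
  {f | ∃ M N : Multiset (Edge V E), Balanced V E M N ∧ f = mon K M - mon K N}

lemma toric_le_span_balanced :
    toricIdeal K V E ≤ Ideal.span (BalancedBinomials K E) := by
  intro f hf
  generalize hn : f.support.card = n
  induction n using Nat.strong_induction_on generalizing f with
  | _ n ih =>
    by_cases hf0 : f = 0
    · rw [hf0]; exact zero_mem _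
    · obtain ⟨a, ha⟩ : f.support.Nonempty := by
        rw [Finset.nonempty_iff_ne_empty]
        intro h
        exact hf0 (MvPolynomial.support_eq_empty.mp h)
      -- find a second exponent with the same degree vector
      have hker : phiH K V E f = 0 := hf
      have h3 : (0 : MvPolynomial V K) =
          ∑ m ∈ f.support, monomial (degVec m.toMultiset) (coeff m f) := by
        calc (0 : MvPolynomial V K) = phiH K V E f := hker.symm
        _ = phiH K V E (∑ m ∈ f.support, monomial m (coeff m f)) := by rw [← f.as_sum]
        _ = ∑ m ∈ f.support, phiH K V E (monomial m (coeff m f)) := map_sum _ _ _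
        _ = ∑ m ∈ f.support, monomial (degVec m.toMultiset) (coeff m f) := by
              simp_rw [phi_monomial]
      have h4 : (0 : K) =
          ∑ m ∈ f.support, if degVec m.toMultiset = degVec a.toMultiset then coeff m f else 0 := by
        have := congrArg (coeff (degVec a.toMultiset)) h3
        simpa [coeff_sum, coeff_monomial] using this
      have hexb : ∃ b ∈ f.support, b ≠ a ∧ degVec b.toMultiset = degVec a.toMultiset := by
        by_contra hno
        push_neg at hno
        have : ∑ m ∈ f.support,
            (if degVec m.toMultiset = degVec a.toMultiset then coeff m f else 0) = coeff a f := by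
          rw [Finset.sum_eq_single a]
          · rw [if_pos rfl]
          · intro b hb hba
            rw [if_neg (hno b hb hba)]
          · intro h; exact absurd ha h
        rw [this] at h4
        exact (MvPolynomial.mem_support_iff.mp ha) h4.symm
      obtain ⟨b, hb, hba, hdeg⟩ := hexb
      set g : MvPolynomial (Edge V E) K := monomial a 1 - monomial b 1 with hg
      have hgbal : Balanced V E a.toMultiset b.toMultiset :=
        (balanced_iff_degVec _ _).mpr hdeg.symm
      have hgtoric : g ∈ toricIdeal K V E := (mem_toric_iff' a b).mpr hgbal
      have hgspan : g ∈ Ideal.span (BalancedBinomials K E) := by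
        apply Ideal.subset_span
        refine ⟨a.toMultiset, b.toMultiset, hgbal, ?_⟩
        rw [hg, mon, mon, Finsupp.toMultiset_toFinsupp, Finsupp.toMultiset_toFinsupp]
      set f' : MvPolynomial (Edge V E) K := f - C (coeff a f) * g with hf'
      have hf'toric : f' ∈ toricIdeal K V E := by
        apply sub_mem hf
        exact Ideal.mul_mem_left _ _ hgtoric
      have hsupp : f'.support ⊆ f.support.erase a := by
        intro m hm
        rw [MvPolynomial.mem_support_iff] at hm
        rw [Finset.mem_erase]
        have hcoeff : coeff m f' = coeff m f -
            coeff a f * ((if a = m then 1 else 0) - if b = m then 1 else 0) := by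
          rw [hf', hg]
          simp [coeff_sub, coeff_C_mul, coeff_monomial, mul_sub]
        constructor
        · intro hma
          apply hm
          rw [hcoeff, if_pos hma.symm, if_neg (fun h => hba (h.trans hma)), hma]
          ring
        · by_contra hmf
          apply hm
          rw [MvPolynomial.notMem_support_iff] at hmf
          have hma : a ≠ m := fun h =>
            (MvPolynomial.mem_support_iff.mp ha) (by rw [h]; exact hmf)
          have hmb : b ≠ m := fun h =>
            (MvPolynomial.mem_support_iff.mp hb) (by rw [h]; exact hmf)
          rw [hcoeff, hmf, if_neg hma, if_neg hmb]
          ring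
      have hcard : f'.support.card < n := by
        calc f'.support.card ≤ (f.support.erase a).card := Finset.card_le_card hsupp
        _ < f.support.card := Finset.card_erase_lt_of_mem ha
        _ = n := hn
      have hf'span : f' ∈ Ideal.span (BalancedBinomials K E) :=
        ih _ hcard hf'toric rfl
      have : f = f' + C (coeff a f) * g := by rw [hf']; ring
      rw [this]
      exact add_mem hf'span (Ideal.mul_mem_left _ _ hgspan)

lemma balanced_mon_mem_graver_span (M N : Multiset (Edge V E)) (hbal : Balanced V E M N) :
    mon K M - mon K N ∈ Ideal.span (GraverSet K V E) := by
  generalize hn : Multiset.card M + Multiset.card N = n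
  induction n using Nat.strong_induction_on generalizing M N with
  | _ n ih =>
    by_cases hMN : M = N
    · rw [hMN, sub_self]; exact zero_mem _
    by_cases hp : Primitive V E M N
    · apply Ideal.subset_span
      exact ⟨M, N, hp, hMN, (binom_eq M N).symm⟩
    · rw [Primitive] at hp
      push_neg at hp
      obtain ⟨B', R', hne', hbal', hBlt, hRlt⟩ := hp hbal
      have hBle : B' ≤ M := le_of_lt hBlt
      have hRle : R' ≤ N := le_of_lt hRlt
      set B'' := M - B' with hB''
      set R'' := N - R' with hR''
      have hMdecomp : M = B' + B'' := by
        rw [hB'', add_comm, tsub_add_cancel_of_le hBle]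
      have hNdecomp : N = R' + R'' := by
        rw [hR'', add_comm, tsub_add_cancel_of_le hRle]
      have hbal'' : Balanced V E B'' R'' := by
        intro v
        have h1 : degIn V E v B' + degIn V E v B'' = degIn V E v M := by
          rw [hMdecomp, degIn_add]
        have h2 : degIn V E v R' + degIn V E v R'' = degIn V E v N := by
          rw [hNdecomp, degIn_add]
        have h3 := hbal v
        have h4 := hbal' v
        omega
      have hkey : mon K M - mon K N =
          mon K B'' * (mon K B' - mon K R') + mon K R' * (mon K B'' - mon K R'') := by
        rw [hMdecomp, hNdecomp, mon_add, mon_add]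
        ring
      have hcard1 : Multiset.card B' + Multiset.card R' < n := by
        have := Multiset.card_lt_card hBlt
        have := Multiset.card_lt_card hRlt
        omega
      have hcard2 : Multiset.card B'' + Multiset.card R'' < n := by
        have hcB : Multiset.card M = Multiset.card B' + Multiset.card B'' := by
          rw [hMdecomp, Multiset.card_add]
        have hcR : Multiset.card N = Multiset.card R' + Multiset.card R'' := by
          rw [hNdecomp, Multiset.card_add]
        have hpos : 0 < Multiset.card B' + Multiset.card R' := by
          by_cases h0 : B' = 0
          · have := Multiset.card_pos.mpr (hne' h0)
            omega
          · have := Multiset.card_pos.mpr h0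
            omega
        omega
      rw [hkey]
      exact add_mem
        (Ideal.mul_mem_left _ _ (ih _ hcard1 B' R' hbal' rfl))
        (Ideal.mul_mem_left _ _ (ih _ hcard2 B'' R'' hbal'' rfl))

lemma graver_span_eq_toric :
    Ideal.span (GraverSet K V E) = toricIdeal K V E := by
  apply le_antisymm
  · rw [Ideal.span_le]
    rintro f ⟨B, R, hprim, hne, rfl⟩
    rw [SetLike.mem_coe, binom_eq]
    exact (mem_toric_iff B R).mpr hprim.1
  · intro f hf
    have h1 := toric_le_span_balanced hf
    have h2 : Ideal.span (BalancedBinomials K E) ≤ Ideal.span (GraverSet K V E) := by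
      rw [Ideal.span_le]
      rintro g ⟨M, N, hbal, rfl⟩
      exact balanced_mon_mem_graver_span M N hbal
    exact h2 h1

/-! ### The filtering operator and indispensability -/

open scoped Classical in
/-- Keep only the monomials whose exponent satisfies `q`. -/
noncomputable def fpart (q : (Edge V E →₀ ℕ) → Prop) (h : MvPolynomial (Edge V E) K) :
    MvPolynomial (Edge V E) K :=
  letI := Classical.decPred q
  ∑ m ∈ h.support.filter q, monomial m (coeff m h)

open scoped Classical in
lemma coeff_fpart (q : (Edge V E →₀ ℕ) → Prop) (h : MvPolynomial (Edge V E) K)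
    (p : Edge V E →₀ ℕ) :
    coeff p (fpart q h) = if q p then coeff p h else 0 := by
  classical
  rw [fpart, coeff_sum]
  simp_rw [coeff_monomial]
  rw [Finset.sum_ite_eq' (h.support.filter q) p (fun m => coeff m h)]
  by_cases hq : q p
  · by_cases hs : p ∈ h.support
    · rw [if_pos (Finset.mem_filter.mpr ⟨hs, hq⟩), if_pos hq]
    · rw [if_neg (fun hmem => hs (Finset.mem_filter.mp hmem).1), if_pos hq,
        MvPolynomial.notMem_support_iff.mp hs]
  · rw [if_neg (fun hmem => hq (Finset.mem_filter.mp hmem).2), if_neg hq]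

lemma fpart_eq_zero_iff (q : (Edge V E →₀ ℕ) → Prop) (h : MvPolynomial (Edge V E) K) :
    fpart q h ≠ 0 → ∃ p, q p ∧ coeff p h ≠ 0 := by
  intro hne
  obtain ⟨p, hp⟩ : ∃ p, coeff p (fpart q h) ≠ 0 := by
    by_contra hno
    push_neg at hno
    exact hne (MvPolynomial.eq_zero_iff.mpr hno)
  rw [coeff_fpart] at hp
  by_cases hq : q p
  · refine ⟨p, hq, ?_⟩
    rwa [if_pos hq] at hp
  · rw [if_neg hq] at hp
    exact absurd rfl hp

/-- degree vector of an exponent -/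
noncomputable def dvec (m : Edge V E →₀ ℕ) : V →₀ ℕ := degVec m.toMultiset

lemma dvec_add (m n : Edge V E →₀ ℕ) : dvec (m + n) = dvec m + dvec n := by
  rw [dvec, dvec, dvec, map_add, degVec_add]

lemma fpart_sum {ι : Type*} (q : (Edge V E →₀ ℕ) → Prop) (s : Finset ι)
    (h : ι → MvPolynomial (Edge V E) K) :
    fpart q (∑ i ∈ s, h i) = ∑ i ∈ s, fpart q (h i) := by
  apply MvPolynomial.ext
  intro p
  simp only [coeff_fpart, coeff_sum]
  by_cases hq : q p
  · simp only [if_pos hq]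
  · simp only [if_neg hq, Finset.sum_const_zero]

lemma fpart_mul_binomial (d : V →₀ ℕ) (u v : Edge V E →₀ ℕ) (hduv : dvec u = dvec v)
    (h : MvPolynomial (Edge V E) K) :
    fpart (fun m => dvec m = d) (h * (monomial u 1 - monomial v 1)) =
      fpart (fun m => dvec m + dvec u = d) h * (monomial u 1 - monomial v 1) := by
  apply MvPolynomial.ext
  intro p
  rw [coeff_fpart, mul_sub, mul_sub, coeff_sub, coeff_sub,
    coeff_mul_monomial', coeff_mul_monomial', coeff_mul_monomial', coeff_mul_monomial']
  simp_rw [coeff_fpart]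
  have key : ∀ w : Edge V E →₀ ℕ, w ≤ p → dvec (p - w) + dvec w = dvec p := by
    intro w hw
    rw [← dvec_add, tsub_add_cancel_of_le hw]
  by_cases hd : dvec p = d
  · rw [if_pos hd]
    congr 1
    · by_cases hu : u ≤ p
      · rw [if_pos hu, if_pos hu, if_pos (by rw [key u hu, hd])]
      · rw [if_neg hu, if_neg hu]
    · by_cases hv : v ≤ p
      · rw [if_pos hv, if_pos hv, if_pos (by rw [hduv, key v hv, hd])]
      · rw [if_neg hv, if_neg hv]
  · rw [if_neg hd]
    by_cases hu : u ≤ p <;> by_cases hv : v ≤ p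
    · rw [if_pos hu, if_pos hv,
        if_neg (fun hc => hd (by rw [← key u hu]; exact hc)),
        if_neg (fun hc => hd (by rw [← key v hv, ← hduv]; exact hc))]
      ring
    · rw [if_pos hu, if_neg hv,
        if_neg (fun hc => hd (by rw [← key u hu]; exact hc))]
      ring
    · rw [if_neg hu, if_pos hv,
        if_neg (fun hc => hd (by rw [← key v hv, ← hduv]; exact hc))]
      ring
    · rw [if_neg hu, if_neg hv]
      ring

lemma fpart_self (a b : Edge V E →₀ ℕ) (hab : dvec a = dvec b) :
    fpart (fun m => dvec m = dvec a) ((monomial a 1 - monomial b 1 : MvPolynomial (Edge V E) K)) =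
      monomial a 1 - monomial b 1 := by
  apply MvPolynomial.ext
  intro p
  rw [coeff_fpart]
  by_cases hd : dvec p = dvec a
  · rw [if_pos hd]
  · rw [if_neg hd, coeff_sub, coeff_monomial, coeff_monomial,
      if_neg (fun h => hd (congrArg dvec h).symm),
      if_neg (fun h => hd ((congrArg dvec h).symm.trans hab.symm)), sub_zero]

lemma toMultiset_le_of_le {u a : Edge V E →₀ ℕ} (hle : u ≤ a) :
    u.toMultiset ≤ a.toMultiset := by
  rw [Multiset.le_iff_count]
  intro e
  rw [Finsupp.count_toMultiset, Finsupp.count_toMultiset]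
  exact Finsupp.le_def.mp hle e

lemma toMultiset_lt_of_lt {u a : Edge V E →₀ ℕ} (hle : u ≤ a) (hne : u ≠ a) :
    u.toMultiset < a.toMultiset := by
  refine lt_of_le_of_ne (toMultiset_le_of_le hle) (fun h => hne ?_)
  have h2 := congrArg Multiset.toFinsupp h
  rwa [Finsupp.toMultiset_toFinsupp, Finsupp.toMultiset_toFinsupp] at h2

theorem indispensable_of_fiber2 (B R : Multiset (Edge V E)) (hprim : Primitive V E B R)
    (hne : B ≠ R) (hfib : ∀ P, Balanced V E B P → P = B ∨ P = R) :
    Indispensable K V E (binom K V E B R) := by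
  intro G hGbin hGspan
  by_contra hcon
  push_neg at hcon
  obtain ⟨hfG, hnfG⟩ := hcon
  set a : Edge V E →₀ ℕ := B.toFinsupp with ha
  set b : Edge V E →₀ ℕ := R.toFinsupp with hb
  have haB : a.toMultiset = B := by rw [ha, Multiset.toFinsupp_toMultiset]
  have hbR : b.toMultiset = R := by rw [hb, Multiset.toFinsupp_toMultiset]
  have hfbin : binom K V E B R = (monomial a 1 - monomial b 1 : MvPolynomial (Edge V E) K) := by
    rw [binom_eq, mon, mon, ← ha, ← hb]
  have hab : a ≠ b := fun h => hne (by rw [← haB, ← hbR, h])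
  have hdab : dvec a = dvec b := by
    rw [dvec, dvec, haB, hbR]
    exact (balanced_iff_degVec B R).mp hprim.1
  -- fiber description in exponent form
  have hfib' : ∀ p : Edge V E →₀ ℕ, dvec p = dvec a → p = a ∨ p = b := by
    intro p hp
    have hbal : Balanced V E B p.toMultiset := by
      rw [balanced_iff_degVec, ← haB]
      exact hp.symm
    rcases hfib p.toMultiset hbal with h | h
    · left
      have := congrArg Multiset.toFinsupp h
      rwa [Finsupp.toMultiset_toFinsupp, ← ha] at this
    · right
      have := congrArg Multiset.toFinsupp h
      rwa [Finsupp.toMultiset_toFinsupp, ← hb] at this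
  -- f lies in the span of G
  have hfI : binom K V E B R ∈ Ideal.span G := by
    rw [hGspan, hfbin]
    exact (mem_toric_iff' a b).mpr (by rw [haB, hbR]; exact hprim.1)
  rw [Ideal.span, Submodule.mem_span_set] at hfI
  obtain ⟨co, hcosupp, hcosum⟩ := hfI
  -- data for each generator
  have hGdata : ∀ g ∈ co.support, ∃ u v : Edge V E →₀ ℕ, u ≠ v ∧
      g = (monomial u 1 - monomial v 1 : MvPolynomial (Edge V E) K) ∧ dvec u = dvec v := by
    intro g hg
    have hgG : g ∈ G := hcosupp hg
    obtain ⟨u, v, huv, hguv⟩ := hGbin g hgG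
    refine ⟨u, v, huv, hguv, ?_⟩
    have hgI : g ∈ toricIdeal K V E := by
      rw [← hGspan]
      exact Ideal.subset_span hgG
    rw [hguv] at hgI
    have hbal := (mem_toric_iff' u v).mp hgI
    rw [dvec, dvec]
    exact (balanced_iff_degVec _ _).mp hbal
  -- apply the graded piece operator
  have hsum : binom K V E B R = ∑ g ∈ co.support, co g * g := by
    rw [← hcosum, Finsupp.sum]
    simp_rw [smul_eq_mul]
  have hkey : binom K V E B R =
      ∑ g ∈ co.support, fpart (fun m => dvec m = dvec a) (co g * g) := by
    conv_lhs => rw [show binom K V E B R =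
      fpart (fun m => dvec m = dvec a) (binom K V E B R) by
        rw [hfbin]; exact (fpart_self a b hdab).symm]
    rw [hsum, fpart_sum]
  -- each summand vanishes
  have hzero : ∀ g ∈ co.support, fpart (fun m => dvec m = dvec a) (co g * g) = 0 := by
    intro g hg
    obtain ⟨u, v, huv, hguv, hduv⟩ := hGdata g hg
    have hrw : co g * g = co g * (monomial u 1 - monomial v 1) := by rw [← hguv]
    rw [hrw, fpart_mul_binomial (dvec a) u v hduv (co g)]
    by_contra hnz
    have hnz' : fpart (fun m => dvec m + dvec u = dvec a) (co g) ≠ 0 := by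
      intro h0
      rw [h0, zero_mul] at hnz
      exact hnz rfl
    obtain ⟨m, hm, _⟩ := fpart_eq_zero_iff _ _ hnz'
    -- m + u and m + v are in the fiber
    have hmu : dvec (m + u) = dvec a := by rw [dvec_add]; exact hm
    have hmv : dvec (m + v) = dvec a := by rw [dvec_add, ← hduv]; exact hm
    have hmuv : m + u ≠ m + v := fun h => huv (add_left_cancel h)
    rcases hfib' (m + u) hmu with h1 | h1 <;> rcases hfib' (m + v) hmv with h2 | h2
    · exact hmuv (h1.trans h2.symm)
    · -- m + u = a, m + v = b
      by_cases hm0 : m = 0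
      · apply hfG
        rw [hm0, zero_add] at h1 h2
        rw [hfbin, ← h1, ← h2, ← hguv]
        exact hcosupp hg
      · -- contradiction with primitivity
        apply hprim.2
        have hule : u ≤ a := h1 ▸ le_add_self
        have hune : u ≠ a := fun h => hm0 (by
          have : m + u = u := h1.trans h.symm
          have := congrArg (fun x => x - u) this
          simpa using this)
        have hvle : v ≤ b := h2 ▸ le_add_self
        have hvne : v ≠ b := fun h => hm0 (by
          have : m + v = v := h2.trans h.symm
          have := congrArg (fun x => x - v) this
          simpa using this)
        refine ⟨u.toMultiset, v.toMultiset, ?_, ?_, ?_, ?_⟩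
        · intro ⟨hu0, hv0⟩
          apply huv
          have hu' := congrArg Multiset.toFinsupp hu0
          have hv' := congrArg Multiset.toFinsupp hv0
          rw [Finsupp.toMultiset_toFinsupp] at hu' hv'
          rw [hu', hv']
        · rw [balanced_iff_degVec]
          exact hduv
        · rw [← haB]; exact toMultiset_lt_of_lt hule hune
        · rw [← hbR]; exact toMultiset_lt_of_lt hvle hvne
    · -- m + u = b, m + v = a
      by_cases hm0 : m = 0
      · apply hnfG
        rw [hm0, zero_add] at h1 h2
        rw [hfbin, show -(monomial a 1 - monomial b 1 : MvPolynomial (Edge V E) K) =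
          monomial b 1 - monomial a 1 by ring, ← h1, ← h2, ← hguv]
        exact hcosupp hg
      · apply hprim.2
        have hvle : v ≤ a := h2 ▸ le_add_self
        have hvne : v ≠ a := fun h => hm0 (by
          have : m + v = v := h2.trans h.symm
          have := congrArg (fun x => x - v) this
          simpa using this)
        have hule : u ≤ b := h1 ▸ le_add_self
        have hune : u ≠ b := fun h => hm0 (by
          have : m + u = u := h1.trans h.symm
          have := congrArg (fun x => x - u) this
          simpa using this)
        refine ⟨v.toMultiset, u.toMultiset, ?_, ?_, ?_, ?_⟩
        · intro ⟨hv0, hu0⟩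
          apply huv
          have hu' := congrArg Multiset.toFinsupp hu0
          have hv' := congrArg Multiset.toFinsupp hv0
          rw [Finsupp.toMultiset_toFinsupp] at hu' hv'
          rw [hu', hv']
        · rw [balanced_iff_degVec]
          exact hduv.symm
        · rw [← haB]; exact toMultiset_lt_of_lt hvle hvne
        · rw [← hbR]; exact toMultiset_lt_of_lt hule hune
    · exact hmuv (h1.trans h2.symm)
  -- conclude f = 0, contradiction
  have hf0 : binom K V E B R = 0 := by
    rw [hkey]
    exact Finset.sum_eq_zero hzero
  have : coeff a (binom K V E B R) = 1 := by
    rw [hfbin, coeff_sub, coeff_monomial, coeff_monomial, if_pos rfl,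
      if_neg (fun h => hab h.symm), sub_zero]
  rw [hf0, coeff_zero] at this
  exact one_ne_zero this.symm

end Generic

/-! ### The `2 × r × c` hypergraph -/

section Specific

variable {K : Type} [Field K] {r c : ℕ}

/-- Vertex type of the no-3-way-interaction hypergraph. -/
abbrev Vt (r c : ℕ) : Type := (Fin 2 × Fin r) ⊕ (Fin 2 × Fin c) ⊕ (Fin r × Fin c)

/-- The edge associated to the cell `p`. -/
def eps (p : Fin 2 × Fin r × Fin c) : Finset (Vt r c) :=
  {Sum.inl (p.1, p.2.1), Sum.inr (Sum.inl (p.1, p.2.2)), Sum.inr (Sum.inr (p.2.1, p.2.2))}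

lemma mem_eps_inl (i : Fin 2) (j : Fin r) (p : Fin 2 × Fin r × Fin c) :
    (Sum.inl (i, j) : Vt r c) ∈ eps p ↔ i = p.1 ∧ j = p.2.1 := by
  simp [eps, Prod.ext_iff]

lemma mem_eps_inr_inl (i : Fin 2) (k : Fin c) (p : Fin 2 × Fin r × Fin c) :
    (Sum.inr (Sum.inl (i, k)) : Vt r c) ∈ eps p ↔ i = p.1 ∧ k = p.2.2 := by
  simp [eps, Prod.ext_iff]

lemma mem_eps_inr_inr (j : Fin r) (k : Fin c) (p : Fin 2 × Fin r × Fin c) :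
    (Sum.inr (Sum.inr (j, k)) : Vt r c) ∈ eps p ↔ j = p.2.1 ∧ k = p.2.2 := by
  simp [eps, Prod.ext_iff]

lemma card_eps (p : Fin 2 × Fin r × Fin c) : (eps p).card = 3 := by
  rw [eps]
  rw [Finset.card_insert_of_notMem (by simp), Finset.card_insert_of_notMem (by simp),
    Finset.card_singleton]

lemma eps_injective : Function.Injective (fun p : Fin 2 × Fin r × Fin c => eps p) := by
  intro p q h
  have h' : eps p = eps q := h
  have h1 : (Sum.inl (p.1, p.2.1) : Vt r c) ∈ eps q := by
    rw [← h']; rw [mem_eps_inl]; exact ⟨rfl, rfl⟩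
  have h2 : (Sum.inr (Sum.inl (p.1, p.2.2)) : Vt r c) ∈ eps q := by
    rw [← h']; rw [mem_eps_inr_inl]; exact ⟨rfl, rfl⟩
  rw [mem_eps_inl] at h1
  rw [mem_eps_inr_inl] at h2
  obtain ⟨ha, hb⟩ := h1
  obtain ⟨-, hc⟩ := h2
  exact Prod.ext ha (Prod.ext hb hc)

variable {E : Finset (Finset (Vt r c))}

local instance : DecidableEq (Edge (Vt r c) E) := Subtype.instDecidableEq

/-- The edges of the hypergraph, as elements of the edge type. -/
def edg (hE : E = Finset.image (fun p : Fin 2 × Fin r × Fin c => eps p) Finset.univ)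
    (p : Fin 2 × Fin r × Fin c) : Edge (Vt r c) E :=
  ⟨eps p, by rw [hE]; exact Finset.mem_image_of_mem _ (Finset.mem_univ p)⟩

variable (hE : E = Finset.image (fun p : Fin 2 × Fin r × Fin c => eps p) Finset.univ)

lemma edg_injective : Function.Injective (edg hE) := by
  intro p q h
  exact eps_injective (congrArg Subtype.val h)

lemma edg_surjective : Function.Surjective (edg hE) := by
  rintro ⟨e, he⟩
  rw [hE, Finset.mem_image] at he
  obtain ⟨p, -, hp⟩ := he
  exact ⟨p, Subtype.ext hp⟩

lemma edg_bijective : Function.Bijective (edg hE) :=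
  ⟨edg_injective hE, edg_surjective hE⟩

lemma card_eq_sum_count_univ {α : Type*} [Fintype α] [DecidableEq α] (M : Multiset α) :
    Multiset.card M = ∑ e : α, M.count e := by
  induction M using Multiset.induction with
  | empty => simp
  | cons a M ih =>
      simp only [Multiset.card_cons, Multiset.count_cons, ih, Finset.sum_add_distrib]
      rw [Finset.sum_ite_eq' Finset.univ a (fun _ => 1), if_pos (Finset.mem_univ a)]

lemma degIn_eq_sum (v : Vt r c) (M : Multiset (Edge (Vt r c) E)) :
    degIn (Vt r c) E v M =
      ∑ p : Fin 2 × Fin r × Fin c, (if v ∈ eps p then M.count (edg hE p) else 0) := by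
  rw [degIn, card_eq_sum_count_univ]
  have h1 : ∀ e : Edge (Vt r c) E, (Multiset.filter (fun e => v ∈ e.1) M).count e
      = if v ∈ e.1 then M.count e else 0 := fun e => Multiset.count_filter
  simp_rw [h1]
  exact (Fintype.sum_bijective (edg hE) (edg_bijective hE) _ _ (fun p => rfl)).symm

lemma degIn_inl (i : Fin 2) (j : Fin r) (M : Multiset (Edge (Vt r c) E)) :
    degIn (Vt r c) E (Sum.inl (i, j)) M = ∑ k : Fin c, M.count (edg hE (i, j, k)) := by
  rw [degIn_eq_sum hE]
  simp only [Fintype.sum_prod_type, mem_eps_inl, ite_and, Finset.sum_ite_irrel,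
    Finset.sum_const_zero, Fintype.sum_ite_eq]
  rw [Finset.sum_comm]
  simp only [Fintype.sum_ite_eq]

lemma degIn_inr_inl (i : Fin 2) (k : Fin c) (M : Multiset (Edge (Vt r c) E)) :
    degIn (Vt r c) E (Sum.inr (Sum.inl (i, k))) M =
      ∑ j : Fin r, M.count (edg hE (i, j, k)) := by
  rw [degIn_eq_sum hE]
  simp only [Fintype.sum_prod_type, mem_eps_inr_inl, ite_and, Finset.sum_ite_irrel,
    Finset.sum_const_zero, Fintype.sum_ite_eq]

lemma degIn_inr_inr (j : Fin r) (k : Fin c) (M : Multiset (Edge (Vt r c) E)) :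
    degIn (Vt r c) E (Sum.inr (Sum.inr (j, k))) M =
      M.count (edg hE (0, j, k)) + M.count (edg hE (1, j, k)) := by
  rw [degIn_eq_sum hE]
  simp only [Fintype.sum_prod_type, mem_eps_inr_inr, ite_and, Finset.sum_ite_irrel,
    Finset.sum_const_zero, Fintype.sum_ite_eq, Fin.sum_univ_two]

lemma fin2_cases (i : Fin 2) : i = 0 ∨ i = 1 := by
  rcases i with ⟨iv, h⟩
  interval_cases iv
  · exact Or.inl rfl
  · exact Or.inr rfl

lemma multiset_eq_of_count (M N : Multiset (Edge (Vt r c) E))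
    (h : ∀ p, M.count (edg hE p) = N.count (edg hE p)) : M = N := by
  rw [Multiset.ext]
  intro e
  obtain ⟨p, rfl⟩ := edg_surjective hE e
  exact h p

/-- The multiset of edges with multiplicities given by a table. -/
def mme (m : Fin 2 × Fin r × Fin c → ℕ) : Multiset (Edge (Vt r c) E) :=
  ∑ p : Fin 2 × Fin r × Fin c, m p • ({edg hE p} : Multiset (Edge (Vt r c) E))

lemma count_mme (m : Fin 2 × Fin r × Fin c → ℕ) (q : Fin 2 × Fin r × Fin c) :
    (mme hE m).count (edg hE q) = m q := by
  rw [mme, Multiset.count_sum']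
  have h1 : ∀ p, (m p • ({edg hE p} : Multiset (Edge (Vt r c) E))).count (edg hE q)
      = if p = q then m p else 0 := by
    intro p
    rw [Multiset.count_nsmul, Multiset.count_singleton]
    by_cases h : p = q
    · subst h; rw [if_pos rfl, if_pos rfl, mul_one]
    · rw [if_neg (fun hh => h (edg_injective hE hh.symm)), if_neg h, mul_zero]
  simp_rw [h1]
  rw [Finset.sum_ite_eq' Finset.univ q m, if_pos (Finset.mem_univ q)]

lemma mme_le (m : Fin 2 × Fin r × Fin c → ℕ) (M : Multiset (Edge (Vt r c) E))
    (h : ∀ p, m p ≤ M.count (edg hE p)) : mme hE m ≤ M := by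
  rw [Multiset.le_iff_count]
  intro e
  obtain ⟨p, rfl⟩ := edg_surjective hE e
  rw [count_mme]
  exact h p

lemma sum_nat_eq_of_int {α : Type*} (s : Finset α) (f g : α → ℕ) (F : α → ℤ)
    (hpt : ∀ x ∈ s, (f x : ℤ) - g x = F x) (hF : ∑ x ∈ s, F x = 0) :
    ∑ x ∈ s, f x = ∑ x ∈ s, g x := by
  have h1 : (∑ x ∈ s, (f x : ℤ)) - ∑ x ∈ s, (g x : ℤ) = 0 := by
    rw [← Finset.sum_sub_distrib, Finset.sum_congr rfl hpt, hF]
  have h2 : (∑ x ∈ s, (f x : ℤ)) = ∑ x ∈ s, (g x : ℤ) := sub_eq_zero.mp h1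
  exact_mod_cast h2

lemma card_eq_of_balanced (hE : E = Finset.image (fun p : Fin 2 × Fin r × Fin c => eps p)
    Finset.univ) (M N : Multiset (Edge (Vt r c) E))
    (h : Balanced (Vt r c) E M N) : Multiset.card M = Multiset.card N := by
  have key : ∀ L : Multiset (Edge (Vt r c) E),
      ∑ v : Vt r c, degIn (Vt r c) E v L = 3 * Multiset.card L := by
    intro L
    simp_rw [degIn_eq_sum hE]
    rw [Finset.sum_comm]
    have h1 : ∀ p : Fin 2 × Fin r × Fin c,
        (∑ v : Vt r c, if v ∈ eps p then L.count (edg hE p) else 0)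
        = 3 * L.count (edg hE p) := by
      intro p
      rw [Finset.sum_ite_mem, Finset.univ_inter, Finset.sum_const, card_eps, smul_eq_mul]
    simp_rw [h1]
    rw [← Finset.mul_sum]
    congr 1
    rw [card_eq_sum_count_univ]
    exact Fintype.sum_bijective (edg hE) (edg_bijective hE) _ _ (fun p => rfl)
  have h1 := key M
  have h2 := key N
  have h3 : ∑ v : Vt r c, degIn (Vt r c) E v M = ∑ v : Vt r c, degIn (Vt r c) E v N :=
    Finset.sum_congr rfl (fun v _ => h v)
  omega

lemma balanced_singleton (e e' : Edge (Vt r c) E)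
    (h : Balanced (Vt r c) E {e} {e'}) : e = e' := by
  apply Subtype.ext
  apply Finset.ext
  intro v
  have hv := h v
  rw [degIn, degIn, Multiset.filter_singleton, Multiset.filter_singleton] at hv
  by_cases h1 : v ∈ e.1 <;> by_cases h2 : v ∈ e'.1
  · exact iff_of_true h1 h2
  · rw [if_pos h1, if_neg h2] at hv; simp at hv
  · rw [if_neg h1, if_pos h2] at hv; simp at hv
  · exact iff_of_false h1 h2

/-- The key combinatorial fact: for the `2 × r × c` hypergraph, the fiber of a primitive
balanced edge set consists of its two halves only. -/
lemma fiber2 (hE : E = Finset.image (fun p : Fin 2 × Fin r × Fin c => eps p) Finset.univ)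
    (B R : Multiset (Edge (Vt r c) E)) (hprim : Primitive (Vt r c) E B R)
    (hne : B ≠ R) : ∀ P, Balanced (Vt r c) E B P → P = B ∨ P = R := by
  intro P hBP
  -- cards agree
  have hcardeq : Multiset.card B = Multiset.card R := card_eq_of_balanced hE B R hprim.1
  -- neither B nor R is a singleton
  have hBnotsingle : ∀ e : Edge (Vt r c) E, B ≠ {e} := by
    intro e h1
    have hcardR : Multiset.card R = 1 := by rw [← hcardeq, h1, Multiset.card_singleton]
    obtain ⟨e', he'⟩ := Multiset.card_eq_one.mp hcardR
    have hee : e = e' := balanced_singleton e e' (by rw [← h1, ← he']; exact hprim.1)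
    exact hne (by rw [h1, he', hee])
  have hRnotsingle : ∀ e : Edge (Vt r c) E, R ≠ {e} := by
    intro e h1
    have hcardB : Multiset.card B = 1 := by rw [hcardeq, h1, Multiset.card_singleton]
    obtain ⟨e', he'⟩ := Multiset.card_eq_one.mp hcardB
    have hee : e' = e := balanced_singleton e' e
      (by rw [← h1, ← he']; exact hprim.1)
    exact hne (by rw [h1, he', hee])
  -- supports of B and R are disjoint
  have hdisj : ∀ p, B.count (edg hE p) = 0 ∨ R.count (edg hE p) = 0 := by
    intro p
    by_contra hcon
    push_neg at hcon
    obtain ⟨h1, h2⟩ := hcon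
    have he1 : edg hE p ∈ B := Multiset.count_pos.mp (Nat.pos_of_ne_zero h1)
    have he2 : edg hE p ∈ R := Multiset.count_pos.mp (Nat.pos_of_ne_zero h2)
    apply hprim.2
    refine ⟨{edg hE p}, {edg hE p}, by simp, fun v => rfl, ?_, ?_⟩
    · exact lt_of_le_of_ne (Multiset.singleton_le.mpr he1) (fun h => hBnotsingle _ h.symm)
    · exact lt_of_le_of_ne (Multiset.singleton_le.mpr he2) (fun h => hRnotsingle _ h.symm)
  -- margin equations between B and R
  have hw : ∀ j k, B.count (edg hE (0, j, k)) + B.count (edg hE (1, j, k))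
      = R.count (edg hE (0, j, k)) + R.count (edg hE (1, j, k)) := by
    intro j k
    have := hprim.1 (Sum.inr (Sum.inr (j, k)))
    rwa [degIn_inr_inr hE, degIn_inr_inr hE] at this
  have hF1 : ∀ j k, B.count (edg hE (1, j, k)) = R.count (edg hE (0, j, k)) ∧
      B.count (edg hE (0, j, k)) = R.count (edg hE (1, j, k)) := by
    intro j k
    have h1 := hdisj (0, j, k)
    have h2 := hdisj (1, j, k)
    have h3 := hw j k
    omega
  -- margin equations between B and P
  have hwP : ∀ j k, B.count (edg hE (0, j, k)) + B.count (edg hE (1, j, k))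
      = P.count (edg hE (0, j, k)) + P.count (edg hE (1, j, k)) := by
    intro j k
    have := hBP (Sum.inr (Sum.inr (j, k)))
    rwa [degIn_inr_inr hE, degIn_inr_inr hE] at this
  have huP : ∀ (i : Fin 2) (j : Fin r), (∑ k : Fin c, B.count (edg hE (i, j, k)))
      = ∑ k : Fin c, P.count (edg hE (i, j, k)) := by
    intro i j
    have := hBP (Sum.inl (i, j))
    rwa [degIn_inl hE, degIn_inl hE] at this
  have hvP : ∀ (i : Fin 2) (k : Fin c), (∑ j : Fin r, B.count (edg hE (i, j, k)))
      = ∑ j : Fin r, P.count (edg hE (i, j, k)) := by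
    intro i k
    have := hBP (Sum.inr (Sum.inl (i, k)))
    rwa [degIn_inr_inl hE, degIn_inr_inl hE] at this
  -- case distinction
  by_cases hy0 : ∀ j k, P.count (edg hE (0, j, k)) = B.count (edg hE (0, j, k))
  · left
    apply multiset_eq_of_count hE
    rintro ⟨i, j, k⟩
    rcases fin2_cases i with rfl | rfl
    · exact hy0 j k
    · have h1 := hwP j k
      have h2 := hy0 j k
      omega
  by_cases hyz : ∀ j k, P.count (edg hE (0, j, k)) = R.count (edg hE (0, j, k))
  · right
    apply multiset_eq_of_count hE
    rintro ⟨i, j, k⟩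
    rcases fin2_cases i with rfl | rfl
    · exact hyz j k
    · have h1 := hwP j k
      have h2 := hyz j k
      have h3 := hF1 j k
      omega
  -- the main construction: a proper balanced subpair, contradicting primitivity
  exfalso
  push_neg at hy0 hyz
  obtain ⟨j₀, k₀, hy00⟩ := hy0
  obtain ⟨j₁, k₁, hy11⟩ := hyz
  apply hprim.2
  set β : Fin 2 × Fin r × Fin c → ℕ := fun p =>
    if p.1 = 0 then ((B.count (edg hE (0, p.2)) : ℤ) - P.count (edg hE (0, p.2))).toNat
    else ((P.count (edg hE (0, p.2)) : ℤ) - B.count (edg hE (0, p.2))).toNat with hβ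
  set ρ : Fin 2 × Fin r × Fin c → ℕ := fun p =>
    if p.1 = 0 then ((P.count (edg hE (0, p.2)) : ℤ) - B.count (edg hE (0, p.2))).toNat
    else ((B.count (edg hE (0, p.2)) : ℤ) - P.count (edg hE (0, p.2))).toNat with hρ
  have h10 : ¬((1 : Fin 2) = 0) := by decide
  have hβ0 : ∀ q, β (0, q) = ((B.count (edg hE (0, q)) : ℤ) - P.count (edg hE (0, q))).toNat :=
    fun q => if_pos rfl
  have hβ1 : ∀ q, β (1, q) = ((P.count (edg hE (0, q)) : ℤ) - B.count (edg hE (0, q))).toNat :=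
    fun q => if_neg h10
  have hρ0 : ∀ q, ρ (0, q) = ((P.count (edg hE (0, q)) : ℤ) - B.count (edg hE (0, q))).toNat :=
    fun q => if_pos rfl
  have hρ1 : ∀ q, ρ (1, q) = ((B.count (edg hE (0, q)) : ℤ) - P.count (edg hE (0, q))).toNat :=
    fun q => if_neg h10
  refine ⟨mme hE β, mme hE ρ, ?_, ?_, ?_, ?_⟩
  · -- not both zero
    rintro ⟨hb0, -⟩
    have h1 : β (0, j₀, k₀) = 0 := by
      rw [← count_mme hE β (0, j₀, k₀), hb0, Multiset.count_zero]
    have h2 : β (1, j₀, k₀) = 0 := by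
      rw [← count_mme hE β (1, j₀, k₀), hb0, Multiset.count_zero]
    rw [hβ0] at h1
    rw [hβ1] at h2
    omega
  · -- balanced
    intro v
    match v with
    | Sum.inl (i, j) =>
      rw [degIn_inl hE, degIn_inl hE]
      simp_rw [count_mme hE]
      rcases fin2_cases i with rfl | rfl
      · apply sum_nat_eq_of_int _ _ _
          (fun k => (B.count (edg hE (0, j, k)) : ℤ) - P.count (edg hE (0, j, k)))
        · intro k _
          rw [hβ0 (j, k), hρ0 (j, k)]
          omega
        · rw [Finset.sum_sub_distrib, sub_eq_zero]
          exact_mod_cast huP 0 j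
      · apply sum_nat_eq_of_int _ _ _
          (fun k => (P.count (edg hE (0, j, k)) : ℤ) - B.count (edg hE (0, j, k)))
        · intro k _
          rw [hβ1 (j, k), hρ1 (j, k)]
          omega
        · rw [Finset.sum_sub_distrib, sub_eq_zero]
          exact_mod_cast (huP 0 j).symm
    | Sum.inr (Sum.inl (i, k)) =>
      rw [degIn_inr_inl hE, degIn_inr_inl hE]
      simp_rw [count_mme hE]
      rcases fin2_cases i with rfl | rfl
      · apply sum_nat_eq_of_int _ _ _
          (fun j => (B.count (edg hE (0, j, k)) : ℤ) - P.count (edg hE (0, j, k)))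
        · intro j _
          rw [hβ0 (j, k), hρ0 (j, k)]
          omega
        · rw [Finset.sum_sub_distrib, sub_eq_zero]
          exact_mod_cast hvP 0 k
      · apply sum_nat_eq_of_int _ _ _
          (fun j => (P.count (edg hE (0, j, k)) : ℤ) - B.count (edg hE (0, j, k)))
        · intro j _
          rw [hβ1 (j, k), hρ1 (j, k)]
          omega
        · rw [Finset.sum_sub_distrib, sub_eq_zero]
          exact_mod_cast (hvP 0 k).symm
    | Sum.inr (Sum.inr (j, k)) =>
      rw [degIn_inr_inr hE, degIn_inr_inr hE, count_mme hE, count_mme hE,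
        count_mme hE, count_mme hE, hβ0 (j, k), hβ1 (j, k), hρ0 (j, k), hρ1 (j, k)]
      omega
  · -- mme β < B
    have hle : mme hE β ≤ B := by
      apply mme_le
      rintro ⟨i, j, k⟩
      rcases fin2_cases i with rfl | rfl
      · rw [hβ0 (j, k)]
        omega
      · rw [hβ1 (j, k)]
        have h1 := hwP j k
        omega
    refine lt_of_le_of_ne hle (fun heq => ?_)
    have h1 : β (0, j₁, k₁) = B.count (edg hE (0, j₁, k₁)) := by
      rw [← count_mme hE β (0, j₁, k₁), heq]
    have h2 : β (1, j₁, k₁) = B.count (edg hE (1, j₁, k₁)) := by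
      rw [← count_mme hE β (1, j₁, k₁), heq]
    rw [hβ0 (j₁, k₁)] at h1
    rw [hβ1 (j₁, k₁)] at h2
    have h3 := hwP j₁ k₁
    have h4 := (hF1 j₁ k₁).1
    omega
  · -- mme ρ < R
    have hle : mme hE ρ ≤ R := by
      apply mme_le
      rintro ⟨i, j, k⟩
      rcases fin2_cases i with rfl | rfl
      · rw [hρ0 (j, k)]
        have h1 := hwP j k
        have h2 := (hF1 j k).1
        omega
      · rw [hρ1 (j, k)]
        have h2 := (hF1 j k).2
        omega
    refine lt_of_le_of_ne hle (fun heq => ?_)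
    have h1 : ρ (0, j₁, k₁) = R.count (edg hE (0, j₁, k₁)) := by
      rw [← count_mme hE ρ (0, j₁, k₁), heq]
    have h2 : ρ (1, j₁, k₁) = R.count (edg hE (1, j₁, k₁)) := by
      rw [← count_mme hE ρ (1, j₁, k₁), heq]
    rw [hρ0 (j₁, k₁)] at h1
    rw [hρ1 (j₁, k₁)] at h2
    have h3 := hwP j₁ k₁
    have h4 := (hF1 j₁ k₁).1
    have h5 := (hF1 j₁ k₁).2
    omega

end Specific

/-- In the toric ideal `I(2,r,c)` of the no-`3`-way-interaction model,
presented as the toric ideal of the `3`-uniform `3`-partite hypergraph with vertices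
`{u_{ij}} ∪ {v_{ik}} ∪ {w_{jk}}` and edges `e_{ijk} = {u_{ij}, v_{ik}, w_{jk}}`, every binomial
arising from a primitive balanced edge set `(B, R)` with `B ≠ R` is indispensable; consequently
the Graver basis is the unique minimal binomial generating set (in particular it generates). -/
theorem no3way_two_tables_graver_indispensable
    (K : Type) [Field K] (r c : ℕ) (hr : 0 < r) (hc : 0 < c)
    (E : Finset (Finset ((Fin 2 × Fin r) ⊕ (Fin 2 × Fin c) ⊕ (Fin r × Fin c))))
    (hEdef : E = Finset.image (fun p : Fin 2 × Fin r × Fin c =>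
        ({Sum.inl (p.1, p.2.1), Sum.inr (Sum.inl (p.1, p.2.2)),
          Sum.inr (Sum.inr (p.2.1, p.2.2))} :
          Finset ((Fin 2 × Fin r) ⊕ (Fin 2 × Fin c) ⊕ (Fin r × Fin c)))) Finset.univ) :
    (∀ f ∈ GraverSet K ((Fin 2 × Fin r) ⊕ (Fin 2 × Fin c) ⊕ (Fin r × Fin c)) E,
        Indispensable K ((Fin 2 × Fin r) ⊕ (Fin 2 × Fin c) ⊕ (Fin r × Fin c)) E f) ∧
      Ideal.span (GraverSet K ((Fin 2 × Fin r) ⊕ (Fin 2 × Fin c) ⊕ (Fin r × Fin c)) E) =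
        toricIdeal K ((Fin 2 × Fin r) ⊕ (Fin 2 × Fin c) ⊕ (Fin r × Fin c)) E := by
  have hE : E = Finset.image (fun p : Fin 2 × Fin r × Fin c => eps p) Finset.univ := hEdef
  constructor
  · rintro f ⟨B, R, hprim, hne, rfl⟩
    exact indispensable_of_fiber2 B R hprim hne (fiber2 hE B R hprim hne)
  · exact graver_span_eq_toric

end ToricHG
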